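/- arXiv:0811.2586 — 3 statements merged into one kernel-verified Lean document; each statement's English description precedes it below -/
import Mathlib

section
/- For every integer m ≥ 1, the least common multiple of the integers 1, 2, …, m is at least 2^(m−1). (This exponential lower bound on lcm(1, …, m) is what makes the paper's verification of relations between integers of size 2^{poly(n)} possible by computations modulo 1, 2, …, m with m = poly(n).) -/
open Nat Finset

lemma key_val {p n k : ℕ} (hp : p.Prime) (hk : k ≤ n) :
    (k+1).factorization p + ((n+1).choose (k+1)).factorization p ≤ Nat.log p (n+1) := by
  set j := (k+1).factorization p with hjdef
  have hj : p ^ j ∣ k + 1 := Nat.ordProj_dvd _ _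
  have hjle : j ≤ Nat.log p (n+1) := by
    rw [Nat.le_log_iff_pow_le hp.one_lt (by omega)]
    exact le_trans (Nat.le_of_dvd (by omega) hj) (by omega)
  have hcb : ((n+1).choose (k+1)).factorization p ≤ Nat.log p (n+1) - j := by
    rw [Nat.factorization_def _ hp, @padicValNat_def _ ⟨hp⟩ _ (Nat.choose_pos (by omega)).ne']
    rw [← Nat.cast_le (α := ℕ∞), ← FiniteMultiplicity.emultiplicity_eq_multiplicity
      (Nat.finiteMultiplicity_iff.2 ⟨hp.ne_one, Nat.choose_pos (by omega)⟩)]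
    rw [hp.emultiplicity_choose (show k+1 ≤ n+1 by omega) (lt_add_one _)]
    rw [Nat.cast_le]
    calc #{i ∈ Ico 1 (Nat.log p (n+1) + 1) |
            p ^ i ≤ (k+1) % p ^ i + (n + 1 - (k+1)) % p ^ i}
        ≤ #(Ico (j+1) (Nat.log p (n+1) + 1)) := by
          apply Finset.card_le_card
          intro i hi
          simp only [Finset.mem_filter, Finset.mem_Ico] at hi ⊢
          refine ⟨?_, hi.1.2⟩
          by_contra h
          push_neg at h
          have hij : i ≤ j := by omega
          have : p ^ i ∣ k + 1 := dvd_trans (pow_dvd_pow p hij) hj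
          have hz : (k+1) % p ^ i = 0 := Nat.mod_eq_zero_of_dvd this
          have hlt : (n + 1 - (k+1)) % p ^ i < p ^ i := Nat.mod_lt _ (pow_pos hp.pos i)
          omega
      _ ≤ Nat.log p (n+1) - j := by rw [Nat.card_Ico]; omega
  omega

lemma key_dvd {n k : ℕ} (hk : k ≤ n) :
    (k+1) * ((n+1).choose (k+1)) ∣ (Finset.Icc 1 (n+1)).lcm id := by
  have hL : (Finset.Icc 1 (n+1)).lcm id ≠ 0 := by
    rw [Ne, Finset.lcm_eq_zero_iff]
    simp only [Set.mem_image, Finset.mem_coe, Finset.mem_Icc, id]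
    rintro ⟨x, ⟨hx, _⟩, hx0⟩
    omega
  rw [← Nat.factorization_le_iff_dvd (Nat.mul_ne_zero (by omega) (Nat.choose_pos (by omega)).ne') hL]
  intro p
  by_cases hp : p.Prime
  · rw [Nat.factorization_mul (show k+1 ≠ 0 by omega)
      (Nat.choose_pos (show k+1 ≤ n+1 by omega)).ne']
    simp only [Finsupp.coe_add, Pi.add_apply]
    refine le_trans (key_val hp hk) ?_
    by_cases hpn : p ≤ n + 1
    · have hmem : p ^ Nat.log p (n+1) ∈ Finset.Icc 1 (n+1) := by
        rw [Finset.mem_Icc]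
        exact ⟨Nat.one_le_pow _ _ hp.pos, Nat.pow_log_le_self p (by omega)⟩
      have : p ^ Nat.log p (n+1) ∣ (Finset.Icc 1 (n+1)).lcm id :=
        Finset.dvd_lcm hmem
      rwa [← Nat.Prime.pow_dvd_iff_le_factorization hp hL]
    · have : Nat.log p (n+1) = 0 := Nat.log_eq_zero_iff.mpr (Or.inl (by omega))
      omega
  · simp [Nat.factorization_eq_zero_of_not_prime _ hp]

theorem stmt_4 (m : ℕ) (hm : 1 ≤ m) :
    2 ^ (m - 1) ≤ (Finset.Icc 1 m).lcm id := by
  obtain ⟨n, rfl⟩ : ∃ n, m = n + 1 := ⟨m - 1, by omega⟩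
  simp only [Nat.add_sub_cancel]
  set L := (Finset.Icc 1 (n+1)).lcm id with hLdef
  have hL : L ≠ 0 := by
    rw [hLdef, Ne, Finset.lcm_eq_zero_iff]
    simp only [Set.mem_image, Finset.mem_coe, Finset.mem_Icc, id]
    rintro ⟨x, ⟨hx, _⟩, hx0⟩
    omega
  have hterm : ∀ k ≤ n, (n+1) * n.choose k ≤ L := by
    intro k hk
    have hd := key_dvd (n := n) (k := k) hk
    have heq : (n+1) * n.choose k = (k+1) * ((n+1).choose (k+1)) :=
      (Nat.add_one_mul_choose_eq n k).trans (mul_comm _ _)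
    rw [heq]
    exact Nat.le_of_dvd (Nat.pos_of_ne_zero hL) hd
  have hsum : (n+1) * 2 ^ n ≤ (n+1) * L := by
    calc (n+1) * 2 ^ n = ∑ k ∈ Finset.range (n+1), (n+1) * n.choose k := by
          rw [← Finset.mul_sum, Nat.sum_range_choose]
      _ ≤ ∑ _k ∈ Finset.range (n+1), L := by
          apply Finset.sum_le_sum
          intro k hk
          exact hterm k (by simpa using Nat.lt_succ_iff.mp (Finset.mem_range.mp hk))
      _ = (n+1) * L := by simp [mul_comm]
  exact Nat.le_of_mul_le_mul_left hsum (by omega)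
end

section
/- Let a right/return walking automaton be given (finite state type Q, non-blank symbol set S, transition δ : Q → Option S → Q × Bool, accepting set A ⊆ Q, initial state q₀), let k : ℕ, s : Fin k → S, and let N = lcm(1, …, Fintype.card Q). Let x, y : Fin (k+1) → ℕ be such that for every i, either x i = y i, or all of the following hold: x i > Fintype.card Q, y i > Fintype.card Q, and x i ≡ y i (mod N). Then the automaton accepts on the sparse guess τ_{x,s} if and only if it accepts on the sparse guess τ_{y,s}. (The paper's Claim 2: the result of the operation of the walking automaton B on the guess 0^{y₀}s₀0^{y₁}s₁…0^{y_{k−1}}s_{k−1}0^{y_k}00⋯ is the same as on the guess with parameters x, provided y_i ≡ x_i (mod N) whenever x_i > #Q and y_i = x_i otherwise.) -/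
/-- One step of a right/return walking automaton with transition `δ` on guess
tape `τ`: a configuration is a pair (state, position); move component `true`
means step right, `false` means return to cell `0`. -/
def wstep {Q S : Type*} (δ : Q → Option S → Q × Bool) (τ : ℕ → Option S) :
    Q × ℕ → Q × ℕ :=
  fun c =>
    let r := δ c.1 (τ c.2)
    (r.1, if r.2 then c.2 + 1 else 0)

/-- The automaton accepts on guess `τ` if the run started at `(q₀, 0)` reaches
a configuration whose state lies in `A`. -/
def wAccepts {Q S : Type*} (δ : Q → Option S → Q × Bool) (A : Set Q) (q₀ : Q)
    (τ : ℕ → Option S) : Prop :=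
  ∃ n : ℕ, ((wstep δ τ)^[n] (q₀, 0)).1 ∈ A

/-- The sparse guess `0^{x 0} s 0 0^{x 1} s 1 ⋯ s (k-1) 0^{x k} 0 0 ⋯`:
cell `p` holds `some (s j)` iff `p = (x 0 + ⋯ + x j) + j`, and `none` otherwise. -/
noncomputable def sparseGuess {S : Type*} (k : ℕ) (x : Fin (k + 1) → ℕ)
    (s : Fin k → S) (p : ℕ) : Option S :=
  if h : ∃ j : Fin k, p = (∑ i ∈ Finset.Iic (Fin.castSucc j), x i) + (j : ℕ)
  then some (s h.choose) else none

set_option linter.unusedSectionVars false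
set_option maxHeartbeats 1000000

namespace WalkAux

variable {Q S : Type*} [Fintype Q]

/-- Forward (sweep) state sequence: state after reading cells `0..n-1`, moving right. -/
def fseq (δ : Q → Option S → Q × Bool) (τ : ℕ → Option S) (q : Q) : ℕ → Q
  | 0 => q
  | n + 1 => (δ (fseq δ τ q n) (τ n)).1

/-- Move bit at step `n` of a sweep. -/
def mvb (δ : Q → Option S → Q × Bool) (τ : ℕ → Option S) (q : Q) (n : ℕ) : Bool :=
  (δ (fseq δ τ q n) (τ n)).2

lemma iter_no_stop (δ : Q → Option S → Q × Bool) (τ : ℕ → Option S) (q : Q) :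
    ∀ n, (∀ m < n, mvb δ τ q m = true) →
      (wstep δ τ)^[n] (q, 0) = (fseq δ τ q n, n) := by
  intro n
  induction n with
  | zero => intro _; rfl
  | succ n ih =>
    intro h
    rw [Function.iterate_succ_apply', ih (fun m hm => h m (hm.trans (Nat.lt_succ_self n)))]
    have hm := h n (Nat.lt_succ_self n)
    unfold mvb at hm
    simp [wstep, fseq, hm]

lemma iter_stop (δ : Q → Option S → Q × Bool) (τ : ℕ → Option S) (q : Q) (n : ℕ)
    (hall : ∀ m < n, mvb δ τ q m = true) (hstop : mvb δ τ q n = false) :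
    (wstep δ τ)^[n + 1] (q, 0) = (fseq δ τ q (n + 1), 0) := by
  rw [Function.iterate_succ_apply', iter_no_stop δ τ q n hall]
  unfold mvb at hstop
  simp [wstep, fseq, hstop]

/-- Sweep simulation: every point of a `τ`-sweep (before any return) is matched by a
point of the `σ`-sweep with the same state; moreover returns are matched with the
same post-return state. -/
def SweepSim (δ : Q → Option S → Q × Bool) (τ σ : ℕ → Option S) : Prop :=
  ∀ (q : Q) (n : ℕ), (∀ m < n, mvb δ τ q m = true) →
    ∃ n', (∀ m < n', mvb δ σ q m = true) ∧ fseq δ σ q n' = fseq δ τ q n ∧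
      (mvb δ τ q n = false → mvb δ σ q n' = false ∧
        fseq δ σ q (n' + 1) = fseq δ τ q (n + 1))

lemma acc_mono (δ : Q → Option S → Q × Bool) (A : Set Q) (τ σ : ℕ → Option S)
    (h : SweepSim δ τ σ) :
    ∀ n (q : Q), ((wstep δ τ)^[n] (q, 0)).1 ∈ A → wAccepts δ A q σ := by
  intro n
  induction n using Nat.strong_induction_on with
  | _ n ih =>
    intro q hn
    by_cases hns : ∀ m < n, mvb δ τ q m = true
    · rw [iter_no_stop δ τ q n hns] at hn
      obtain ⟨n', h1, h2, _⟩ := h q n hns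
      exact ⟨n', by rw [iter_no_stop δ σ q n' h1]; simpa [h2] using hn⟩
    · push_neg at hns
      have hex : ∃ m, mvb δ τ q m = false := by
        obtain ⟨m, _, hm⟩ := hns
        exact ⟨m, by simpa using hm⟩
      classical
      set T := Nat.find hex with hTdef
      have hT : mvb δ τ q T = false := Nat.find_spec hex
      have hTmin : ∀ m < T, mvb δ τ q m = true := by
        intro m hm
        have := Nat.find_min hex hm
        simpa using this
      have hTn : T < n := by
        obtain ⟨m, hmn, hm⟩ := hns
        have : T ≤ m := Nat.find_min' hex (by simpa using hm)
        omega
      have hit := iter_stop δ τ q T hTmin hT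
      set q₁ := fseq δ τ q (T + 1) with hq₁
      have hsplit : n = (n - (T + 1)) + (T + 1) := by omega
      rw [hsplit, Function.iterate_add_apply, hit] at hn
      have hacc1 : wAccepts δ A q₁ σ := ih (n - (T + 1)) (by omega) q₁ hn
      obtain ⟨n', h1, _, h3⟩ := h q T hTmin
      obtain ⟨h4, h5⟩ := h3 hT
      have hit' : (wstep δ σ)^[n' + 1] (q, 0) = (q₁, 0) := by
        rw [iter_stop δ σ q n' h1 h4, h5]
      obtain ⟨m', hm'⟩ := hacc1
      exact ⟨m' + (n' + 1), by rw [Function.iterate_add_apply, hit']; exact hm'⟩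

section Orbit
variable {Q : Type*} [Fintype Q]

lemma orbit_rep (f : Q → Q) (w : Q) :
    ∃ a p, 0 < p ∧ a + p ≤ Fintype.card Q ∧ f^[a + p] w = f^[a] w := by
  obtain ⟨o₁, o₂, hne, heq⟩ := Fintype.exists_ne_map_eq_of_card_lt
    (fun o : Fin (Fintype.card Q + 1) => f^[(o : ℕ)] w) (by simp)
  rcases hne.lt_or_gt with h' | h'
  · refine ⟨(o₁ : ℕ), (o₂ : ℕ) - o₁, by omega, by have := o₂.isLt; omega, ?_⟩
    have h2 : (o₁ : ℕ) + ((o₂ : ℕ) - o₁) = o₂ := by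
      have : (o₁ : ℕ) < o₂ := h'
      omega
    rw [h2]; exact heq.symm
  · refine ⟨(o₂ : ℕ), (o₁ : ℕ) - o₂, by omega, by have := o₁.isLt; omega, ?_⟩
    have h2 : (o₂ : ℕ) + ((o₁ : ℕ) - o₂) = o₁ := by
      have : (o₂ : ℕ) < o₁ := h'
      omega
    rw [h2]; exact heq

lemma orbit_period (f : Q → Q) (w : Q) (a p : ℕ) (h : f^[a + p] w = f^[a] w) :
    ∀ t m, a ≤ m → f^[m + t * p] w = f^[m] w := by
  intro t
  induction t with
  | zero => simp
  | succ t ih =>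
    intro m hm
    have h1 : m + (t + 1) * p = (m - a + t * p) + (a + p) := by
      rw [Nat.succ_mul]; omega
    rw [h1, Function.iterate_add_apply, h, ← Function.iterate_add_apply]
    have h2 : m - a + t * p + a = m + t * p := by omega
    rw [h2]; exact ih m hm

lemma orbit_firstocc (f : Q → Q) (w : Q) (o : ℕ) :
    ∃ o' ≤ o, o' < Fintype.card Q ∧ f^[o'] w = f^[o] w := by
  rcases Nat.lt_or_ge o (Fintype.card Q) with h | h
  · exact ⟨o, le_refl o, h, rfl⟩
  · obtain ⟨a, p, hp, hap, hper⟩ := orbit_rep f w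
    have hmd : (o - a) % p + (o - a) / p * p = o - a := Nat.mod_add_div' _ _
    have hml : (o - a) % p < p := Nat.mod_lt _ hp
    refine ⟨a + (o - a) % p, by omega, by omega, ?_⟩
    have key := orbit_period f w a p hper ((o - a) / p) (a + (o - a) % p)
      (Nat.le_add_right _ _)
    have ho : a + (o - a) % p + (o - a) / p * p = o := by omega
    rw [ho] at key
    exact key.symm

lemma orbit_congr (f : Q → Q) (w : Q) (N L L' : ℕ)
    (hN : N = (Finset.Icc 1 (Fintype.card Q)).lcm id)
    (hL : Fintype.card Q ≤ L) (hL' : Fintype.card Q ≤ L')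
    (hmod : L ≡ L' [MOD N]) : f^[L] w = f^[L'] w := by
  wlog hLL : L ≤ L' generalizing L L'
  · exact (this L' L hL' hL hmod.symm (le_of_not_ge hLL)).symm
  obtain ⟨a, p, hp, hap, hper⟩ := orbit_rep f w
  have hpN : p ∣ N := by
    rw [hN]
    exact Finset.dvd_lcm (by simp [Finset.mem_Icc]; omega)
  have hdvd : N ∣ L' - L := (Nat.modEq_iff_dvd' hLL).mp hmod
  obtain ⟨t, ht⟩ := hpN.trans hdvd
  have ht' : L' = L + t * p := by rw [Nat.mul_comm]; omega
  rw [ht']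
  exact (orbit_period f w a p hper t L (by omega)).symm

end Orbit

/-- Position of symbol `j` on the sparse tape. -/
def spos (k : ℕ) (x : Fin (k + 1) → ℕ) (j : Fin k) : ℕ :=
  (∑ i ∈ Finset.Iic (Fin.castSucc j), x i) + (j : ℕ)

lemma spos_strictMono (k : ℕ) (x : Fin (k + 1) → ℕ) : StrictMono (spos k x) := by
  intro j₁ j₂ h
  unfold spos
  have hsub : Finset.Iic (Fin.castSucc j₁) ⊆ Finset.Iic (Fin.castSucc j₂) :=
    Finset.Iic_subset_Iic.mpr (by exact_mod_cast h.le)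
  have hs := Finset.sum_le_sum_of_subset hsub (f := x)
  have hj : (j₁ : ℕ) < (j₂ : ℕ) := h
  omega

lemma sparse_some (k : ℕ) (x : Fin (k + 1) → ℕ) (s : Fin k → S) (j : Fin k) :
    sparseGuess k x s (spos k x j) = some (s j) := by
  have hex : ∃ j' : Fin k,
      spos k x j = (∑ i ∈ Finset.Iic (Fin.castSucc j'), x i) + (j' : ℕ) := ⟨j, rfl⟩
  rw [sparseGuess, dif_pos hex]
  have h := hex.choose_spec
  have : hex.choose = j := (spos_strictMono k x).injective (h.symm : spos k x hex.choose = spos k x j)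
  rw [this]

lemma sparse_none (k : ℕ) (x : Fin (k + 1) → ℕ) (s : Fin k → S) (p : ℕ)
    (h : ∀ j : Fin k, p ≠ spos k x j) : sparseGuess k x s p = none := by
  rw [sparseGuess, dif_neg]
  rintro ⟨j, hj⟩
  exact h j hj

section Update
variable (k : ℕ) (x : Fin (k + 1) → ℕ) (i : Fin (k + 1)) (v : ℕ)

/-- Start of block `i`. -/
def bpos : ℕ := (∑ j ∈ Finset.Iio i, x j) + (i : ℕ)

lemma bpos_update : bpos k (Function.update x i v) i = bpos k x i := by
  unfold bpos
  congr 1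
  refine Finset.sum_congr rfl fun j hj => ?_
  have : j ≠ i := by
    have := Finset.mem_Iio.mp hj
    exact ne_of_lt this
  rw [Function.update_of_ne this]

lemma spos_lt_bpos {j : Fin k} (hj : Fin.castSucc j < i) : spos k x j < bpos k x i := by
  unfold spos bpos
  have hsub : Finset.Iic (Fin.castSucc j) ⊆ Finset.Iio i := by
    intro e he
    exact Finset.mem_Iio.mpr (lt_of_le_of_lt (Finset.mem_Iic.mp he) hj)
  have hs := Finset.sum_le_sum_of_subset hsub (f := x)
  have hji : ((Fin.castSucc j : Fin (k + 1)) : ℕ) < (i : ℕ) := hj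
  have : (j : ℕ) < (i : ℕ) := by simpa using hji
  omega

lemma bpos_le_spos {j : Fin k} (hj : i ≤ Fin.castSucc j) :
    bpos k x i + x i ≤ spos k x j := by
  unfold spos bpos
  have hsub : Finset.Iic i ⊆ Finset.Iic (Fin.castSucc j) := Finset.Iic_subset_Iic.mpr hj
  have hs := Finset.sum_le_sum_of_subset hsub (f := x)
  have hIic : ∑ e ∈ Finset.Iic i, x e = x i + ∑ e ∈ Finset.Iio i, x e := by
    rw [← Finset.Iio_insert, Finset.sum_insert (by simp)]
  have hji : (i : ℕ) ≤ ((Fin.castSucc j : Fin (k + 1)) : ℕ) := hj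
  have : (i : ℕ) ≤ (j : ℕ) := by simpa using hji
  omega

lemma spos_update_lt {j : Fin k} (hj : Fin.castSucc j < i) :
    spos k (Function.update x i v) j = spos k x j := by
  unfold spos
  congr 1
  refine Finset.sum_congr rfl fun e he => ?_
  have : e ≠ i := ne_of_lt (lt_of_le_of_lt (Finset.mem_Iic.mp he) hj)
  rw [Function.update_of_ne this]

lemma spos_update_ge {j : Fin k} (hj : i ≤ Fin.castSucc j) :
    spos k (Function.update x i v) j + x i = spos k x j + v := by
  unfold spos
  have hi : i ∈ Finset.Iic (Fin.castSucc j) := Finset.mem_Iic.mpr hj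
  have h1 : ∑ e ∈ Finset.Iic (Fin.castSucc j), Function.update x i v e
      = v + ∑ e ∈ (Finset.Iic (Fin.castSucc j)).erase i, x e := by
    rw [Finset.sum_update_of_mem hi, Finset.sdiff_singleton_eq_erase]
  have h2 : x i + ∑ e ∈ (Finset.Iic (Fin.castSucc j)).erase i, x e
      = ∑ e ∈ Finset.Iic (Fin.castSucc j), x e := Finset.add_sum_erase _ x hi
  omega

end Update


section Tapes
variable {S : Type*} (k : ℕ) (x : Fin (k + 1) → ℕ) (s : Fin k → S) (i : Fin (k + 1)) (v : ℕ)

lemma tape1 : ∀ p < bpos k x i,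
    sparseGuess k (Function.update x i v) s p = sparseGuess k x s p := by
  intro p hp
  by_cases hex : ∃ j : Fin k, p = spos k x j
  · obtain ⟨j, rfl⟩ := hex
    have hji : Fin.castSucc j < i := by
      by_contra hcon
      have := bpos_le_spos k x i (le_of_not_gt hcon)
      omega
    rw [sparse_some, show spos k x j = spos k (Function.update x i v) j from
      (spos_update_lt k x i v hji).symm, sparse_some]
  · push_neg at hex
    rw [sparse_none k x s p hex, sparse_none]
    intro j hj
    rcases lt_or_ge (Fin.castSucc j) i with hji | hji
    · exact hex j (by rw [hj, spos_update_lt k x i v hji])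
    · have h5 := bpos_le_spos k (Function.update x i v) i hji
      rw [bpos_update, Function.update_self] at h5
      omega
lemma tape2 : ∀ o < x i, sparseGuess k x s (bpos k x i + o) = none := by
  intro o ho
  apply sparse_none
  intro j hj
  rcases lt_or_ge (Fin.castSucc j) i with hji | hji
  · have := spos_lt_bpos k x i hji
    omega
  · have := bpos_le_spos k x i hji
    omega
lemma tape3 : ∀ o < v,
    sparseGuess k (Function.update x i v) s (bpos k x i + o) = none := by
  intro o ho
  apply sparse_none
  intro j hj
  rcases lt_or_ge (Fin.castSucc j) i with hji | hji
  · have h5 := spos_lt_bpos k (Function.update x i v) i hji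
    rw [bpos_update] at h5
    have h6 := spos_update_lt k x i v hji
    omega
  · have h5 := bpos_le_spos k (Function.update x i v) i hji
    rw [bpos_update, Function.update_self] at h5
    omega
lemma tape4 : ∀ p, sparseGuess k (Function.update x i v) s (bpos k x i + v + p)
    = sparseGuess k x s (bpos k x i + x i + p) := by
  intro p
  by_cases hex : ∃ j : Fin k, bpos k x i + x i + p = spos k x j
  · obtain ⟨j, hj⟩ := hex
    have hji : i ≤ Fin.castSucc j := by
      by_contra hcon
      have := spos_lt_bpos k x i (lt_of_not_ge hcon)
      omega
    have h5 := spos_update_ge k x i v hji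
    have h6 : bpos k x i + v + p = spos k (Function.update x i v) j := by omega
    rw [hj, h6, sparse_some, sparse_some]
  · push_neg at hex
    rw [sparse_none k x s _ hex, sparse_none]
    intro j hj
    rcases lt_or_ge (Fin.castSucc j) i with hji | hji
    · have h5 := spos_lt_bpos k (Function.update x i v) i hji
      rw [bpos_update] at h5
      omega
    · have h5 := spos_update_ge k x i v hji
      exact hex j (by omega)
end Tapes

theorem pump_sim (δ : Q → Option S → Q × Bool) (τ σ : ℕ → Option S) (b L L' N : ℕ)
    (hN : N = (Finset.Icc 1 (Fintype.card Q)).lcm id)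
    (hL : Fintype.card Q ≤ L) (hL' : Fintype.card Q ≤ L')
    (hmod : L ≡ L' [MOD N])
    (h1 : ∀ p < b, σ p = τ p)
    (h2 : ∀ o < L, τ (b + o) = none)
    (h3 : ∀ o < L', σ (b + o) = none)
    (h4 : ∀ p, σ (b + L' + p) = τ (b + L + p)) :
    SweepSim δ τ σ := by
  intro q n Hn
  set f : Q → Q := fun z => (δ z none).1 with hf
  set g : Q → Bool := fun z => (δ z none).2 with hg
  set w : Q := fseq δ τ q b with hw
  -- F1
  have F1 : ∀ m ≤ b, fseq δ σ q m = fseq δ τ q m := by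
    intro m hm
    induction m with
    | zero => rfl
    | succ m ih =>
      show (δ (fseq δ σ q m) (σ m)).1 = (δ (fseq δ τ q m) (τ m)).1
      rw [ih (by omega), h1 m (by omega)]
  -- F2
  have F2 : ∀ o ≤ L, fseq δ τ q (b + o) = f^[o] w := by
    intro o ho
    induction o with
    | zero => rfl
    | succ o ih =>
      show (δ (fseq δ τ q (b + o)) (τ (b + o))).1 = f^[o + 1] w
      rw [ih (by omega), h2 o (by omega), Function.iterate_succ_apply']
  -- F3
  have F3 : ∀ o ≤ L', fseq δ σ q (b + o) = f^[o] w := by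
    intro o ho
    induction o with
    | zero => exact F1 b le_rfl
    | succ o ih =>
      show (δ (fseq δ σ q (b + o)) (σ (b + o))).1 = f^[o + 1] w
      rw [ih (by omega), h3 o (by omega), Function.iterate_succ_apply']
  have P1 : f^[L] w = f^[L'] w := orbit_congr f w N L L' hN hL hL' hmod
  -- F4
  have F4 : ∀ p, fseq δ σ q (b + L' + p) = fseq δ τ q (b + L + p) := by
    intro p
    induction p with
    | zero => rw [Nat.add_zero, Nat.add_zero, F2 L le_rfl, F3 L' le_rfl, P1]
    | succ p ih =>
      show (δ (fseq δ σ q (b + L' + p)) (σ (b + L' + p))).1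
        = (δ (fseq δ τ q (b + L + p)) (τ (b + L + p))).1
      rw [ih, h4 p]
  -- move-bit facts
  have M1 : ∀ m < b, mvb δ σ q m = mvb δ τ q m := by
    intro m hm
    unfold mvb
    rw [F1 m (by omega), h1 m hm]
  have M2τ : ∀ o < L, mvb δ τ q (b + o) = g (f^[o] w) := by
    intro o ho
    unfold mvb
    rw [F2 o (by omega), h2 o ho]
  have M2σ : ∀ o < L', mvb δ σ q (b + o) = g (f^[o] w) := by
    intro o ho
    unfold mvb
    rw [F3 o (by omega), h3 o ho]
  have M3 : ∀ p, mvb δ σ q (b + L' + p) = mvb δ τ q (b + L + p) := by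
    intro p
    unfold mvb
    rw [F4 p, h4 p]
  -- main case split
  rcases Nat.lt_or_ge n b with hnb | hnb
  · -- n < b
    refine ⟨n, ?_, F1 n hnb.le, ?_⟩
    · intro m hm
      rw [M1 m (hm.trans hnb)]
      exact Hn m hm
    · intro hstop
      rcases Nat.lt_or_ge n b with _ | _
      constructor
      · rw [M1 n hnb]; exact hstop
      · exact F1 (n + 1) (by omega)
      · omega
  rcases Nat.lt_or_ge n (b + L) with hnL | hnL
  · -- block case: n = b + o, o < L
    set o : ℕ := n - b with hodef
    have hno : n = b + o := by omega
    have hoL : o < L := by omega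
    obtain ⟨o', ho'o, ho'C, ho'eq⟩ := orbit_firstocc f w o
    refine ⟨b + o', ?_, ?_, ?_⟩
    · intro m hm
      rcases Nat.lt_or_ge m b with hmb | hmb
      · rw [M1 m hmb]; exact Hn m (by omega)
      · have : m = b + (m - b) := by omega
        rw [this, M2σ (m - b) (by omega)]
        have h5 : mvb δ τ q (b + (m - b)) = g (f^[m - b] w) := M2τ (m - b) (by omega)
        rw [← h5]
        exact Hn (b + (m - b)) (by omega)
    · rw [hno, F3 o' (by omega), F2 o (by omega), ho'eq]
    · intro hstop
      rw [hno] at hstop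
      rw [M2τ o hoL] at hstop
      constructor
      · rw [M2σ o' (by omega), ho'eq]; exact hstop
      · show fseq δ σ q (b + (o' + 1)) = fseq δ τ q (n + 1)
        rw [hno]
        show fseq δ σ q (b + (o' + 1)) = fseq δ τ q (b + (o + 1))
        rw [F3 (o' + 1) (by omega), F2 (o + 1) (by omega),
          Function.iterate_succ_apply', Function.iterate_succ_apply', ho'eq]
  · -- tail case: n = b + L + p
    set p : ℕ := n - (b + L) with hpdef
    have hnp : n = b + L + p := by omega
    refine ⟨b + L' + p, ?_, ?_, ?_⟩
    · intro m hm
      rcases Nat.lt_or_ge m b with hmb | hmb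
      · rw [M1 m hmb]; exact Hn m (by omega)
      rcases Nat.lt_or_ge m (b + L') with hmL | hmL
      · set o : ℕ := m - b with _hodef
        have hmo : m = b + o := by omega
        obtain ⟨o', ho'o, ho'C, ho'eq⟩ := orbit_firstocc f w o
        rw [hmo, M2σ o (by omega), ← ho'eq]
        have h5 : mvb δ τ q (b + o') = g (f^[o'] w) := M2τ o' (by omega)
        rw [← h5]
        exact Hn (b + o') (by omega)
      · set p' : ℕ := m - (b + L') with _hp'def
        have hmp : m = b + L' + p' := by omega
        rw [hmp, M3 p']
        exact Hn (b + L + p') (by omega)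
    · rw [hnp]; exact F4 p
    · intro hstop
      rw [hnp] at hstop
      refine ⟨by rw [M3 p]; exact hstop, ?_⟩
      show fseq δ σ q (b + L' + (p + 1)) = fseq δ τ q (n + 1)
      rw [hnp]
      show fseq δ σ q (b + L' + (p + 1)) = fseq δ τ q (b + L + (p + 1))
      exact F4 (p + 1)




lemma coord (δ : Q → Option S → Q × Bool) (A : Set Q) (q₀ : Q) (k : ℕ)
    (s : Fin k → S) (N : ℕ) (hN : N = (Finset.Icc 1 (Fintype.card Q)).lcm id)
    (x : Fin (k + 1) → ℕ) (i : Fin (k + 1)) (v : ℕ)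
    (hx : Fintype.card Q ≤ x i) (hv : Fintype.card Q ≤ v)
    (hmod : x i ≡ v [MOD N]) :
    wAccepts δ A q₀ (sparseGuess k x s) ↔
      wAccepts δ A q₀ (sparseGuess k (Function.update x i v) s) := by
  have sim1 : SweepSim δ (sparseGuess k x s) (sparseGuess k (Function.update x i v) s) :=
    pump_sim δ _ _ (bpos k x i) (x i) v N hN hx hv hmod
      (tape1 k x s i v) (tape2 k x s i) (tape3 k x s i v) (tape4 k x s i v)
  have sim2 : SweepSim δ (sparseGuess k (Function.update x i v) s) (sparseGuess k x s) :=
    pump_sim δ _ _ (bpos k x i) v (x i) N hN hv hx hmod.symm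
      (fun p hp => (tape1 k x s i v p hp).symm) (tape3 k x s i v) (tape2 k x s i)
      (fun p => (tape4 k x s i v p).symm)
  constructor
  · rintro ⟨n, hn⟩
    exact acc_mono δ A _ _ sim1 n q₀ hn
  · rintro ⟨n, hn⟩
    exact acc_mono δ A _ _ sim2 n q₀ hn

end WalkAux

theorem stmt_10 {Q S : Type*} [Fintype Q] (δ : Q → Option S → Q × Bool)
    (A : Set Q) (q₀ : Q) (k : ℕ) (s : Fin k → S)
    (N : ℕ) (hN : N = (Finset.Icc 1 (Fintype.card Q)).lcm id)
    (x y : Fin (k + 1) → ℕ)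
    (hxy : ∀ i : Fin (k + 1), x i = y i ∨
      (Fintype.card Q < x i ∧ Fintype.card Q < y i ∧ x i ≡ y i [MOD N])) :
    wAccepts δ A q₀ (sparseGuess k x s) ↔ wAccepts δ A q₀ (sparseGuess k y s) := by
  classical
  set z : ℕ → (Fin (k + 1) → ℕ) := fun m i => if (i : ℕ) < m then y i else x i with hz
  have hz0 : z 0 = x := funext fun i => by simp [hz]
  have hzend : z (k + 1) = y := funext fun i => by simp [hz, i.isLt]
  have hstep : ∀ m, (wAccepts δ A q₀ (sparseGuess k (z m) s) ↔
      wAccepts δ A q₀ (sparseGuess k (z (m + 1)) s)) := by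
    intro m
    rcases Nat.lt_or_ge m (k + 1) with hm | hm
    · set im : Fin (k + 1) := ⟨m, hm⟩ with him
      have hupd : z (m + 1) = Function.update (z m) im (y im) := by
        funext i
        by_cases hi : i = im
        · subst hi
          simp [hz, him]
        · have hni : (i : ℕ) ≠ m := fun hc => hi (Fin.ext (by simp [him, hc]))
          rw [Function.update_of_ne hi]
          simp only [hz]
          by_cases h5 : (i : ℕ) < m
          · rw [if_pos h5, if_pos (by omega)]
          · rw [if_neg h5, if_neg (by omega)]
      have hzm : z m im = x im := by simp [hz, him]
      rcases hxy im with heq | ⟨hx1, hy1, hmod1⟩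
      · have : z (m + 1) = z m := by
          rw [hupd, ← heq, ← hzm, Function.update_eq_self]
        rw [this]
      · rw [hupd]
        exact WalkAux.coord δ A q₀ k s N hN (z m) im (y im)
          (by rw [hzm]; omega) (by omega) (by rw [hzm]; exact hmod1)
    · have : z (m + 1) = z m := by
        funext i
        have : (i : ℕ) < m := by have := i.isLt; omega
        simp [hz, this, Nat.lt_succ_of_lt this]
      rw [this]
  have hall : ∀ m, (wAccepts δ A q₀ (sparseGuess k x s) ↔
      wAccepts δ A q₀ (sparseGuess k (z m) s)) := by
    intro m
    induction m with
    | zero => rw [hz0]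
    | succ m ih => exact ih.trans (hstep m)
  have := hall (k + 1)
  rwa [hzend] at this
end

section
/- Let a right/return walking automaton be given (finite state type Q, non-blank symbol set S, transition δ : Q → Option S → Q × Bool, accepting set A ⊆ Q, initial state q₀), let k : ℕ and s : Fin k → S, and let N = lcm(1, …, Fintype.card Q). If the automaton accepts on the sparse guess τ_{x,s} for some x : Fin (k+1) → ℕ, then there exists y : Fin (k+1) → ℕ with y i ≤ Fintype.card Q + N for all i such that the automaton accepts on the sparse guess τ_{y,s}. (The paper's Claim 1: if B accepts on some k-sparse guess, then it accepts on a k-sparse guess of exponentially bounded length.) -/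
namespace Stmt11Aux

variable {Q S : Type*}

/-- state map on blanks -/
def hs (δ : Q → Option S → Q × Bool) (q : Q) : Q := (δ q none).1

/-- all move-flags are `true` along the first `t` blank steps from `q` -/
def good (δ : Q → Option S → Q × Bool) (q : Q) (t : ℕ) : Prop :=
  ∀ i < t, (δ ((hs δ)^[i] q) none).2 = true

theorem good_mono {δ : Q → Option S → Q × Bool} {q : Q} {t t' : ℕ}
    (h : good δ q t) (ht : t' ≤ t) : good δ q t' :=
  fun i hi => h i (lt_of_lt_of_le hi ht)

theorem good_zero (δ : Q → Option S → Q × Bool) (q : Q) : good δ q 0 :=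
  fun i hi => absurd hi (Nat.not_lt_zero i)

/-- run through `t` blanks, all flags true: move right `t` cells -/
theorem blank_run (δ : Q → Option S → Q × Bool) (τ : ℕ → Option S)
    (q : Q) (p t : ℕ) (hτ : ∀ i < t, τ (p + i) = none) (hg : good δ q t) :
    (wstep δ τ)^[t] (q, p) = ((hs δ)^[t] q, p + t) := by
  induction t with
  | zero => simp
  | succ t ih =>
    rw [Function.iterate_succ_apply', ih (fun i hi => hτ i (Nat.lt_succ_of_lt hi))
      (good_mono hg (Nat.le_succ t))]
    rw [wstep, Function.iterate_succ_apply']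
    simp only
    rw [hτ t (Nat.lt_succ_self t)]
    have : (δ ((hs δ)^[t] q) none).2 = true := hg t (Nat.lt_succ_self t)
    rw [this]
    simp [hs]
    ring

/-- run through `t` blanks then a blank with flag false: reset to cell 0 -/
theorem blank_reset (δ : Q → Option S → Q × Bool) (τ : ℕ → Option S)
    (q : Q) (p t : ℕ) (hτ : ∀ i ≤ t, τ (p + i) = none) (hg : good δ q t)
    (hb : (δ ((hs δ)^[t] q) none).2 = false) :
    (wstep δ τ)^[t+1] (q, p) = ((hs δ)^[t+1] q, 0) := by
  rw [Function.iterate_succ_apply',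
    blank_run δ τ q p t (fun i hi => hτ i (le_of_lt hi)) hg]
  rw [wstep, Function.iterate_succ_apply']
  simp only
  rw [hτ t (le_refl t), hb]
  simp [hs]

end Stmt11Aux

namespace Stmt11Aux

variable {Q : Type*} [Fintype Q]

theorem exists_period (f : Q → Q) (q : Q) :
    ∃ i p : ℕ, 0 < p ∧ i + p ≤ Fintype.card Q ∧ f^[i] q = f^[i + p] q := by
  have : ¬ Function.Injective (fun n : Fin (Fintype.card Q + 1) => f^[(n : ℕ)] q) := by
    intro hinj
    have := Fintype.card_le_of_injective _ hinj
    simp at this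
  rw [Function.not_injective_iff] at this
  obtain ⟨a, b, hab, hne⟩ := this
  rcases Nat.lt_or_ge (a : ℕ) (b : ℕ) with h | h
  · exact ⟨a, b - a, Nat.sub_pos_of_lt h, by omega,
      by rw [hab]; congr 1; omega⟩
  · have h' : (b : ℕ) < (a : ℕ) := by
      rcases Nat.lt_or_ge (b : ℕ) (a : ℕ) with h' | h'
      · exact h'
      · exact absurd (Fin.ext (le_antisymm h' h)) hne
    exact ⟨b, a - b, Nat.sub_pos_of_lt h', by omega,
      by rw [← hab]; congr 1; omega⟩

omit [Fintype Q] in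
theorem iter_period (f : Q → Q) (q : Q) {i p : ℕ}
    (hp : f^[i] q = f^[i + p] q) :
    ∀ m, i ≤ m → ∀ c, f^[m + c * p] q = f^[m] q := by
  have key : ∀ m, i ≤ m → f^[m + p] q = f^[m] q := by
    intro m hm
    obtain ⟨d, rfl⟩ := Nat.exists_eq_add_of_le hm
    have : i + d + p = d + (i + p) := by ring
    rw [this, Function.iterate_add_apply, ← hp, ← Function.iterate_add_apply]
    congr 1; ring
  intro m hm c
  induction c with
  | zero => simp
  | succ c ih =>
    have : m + (c + 1) * p = (m + c * p) + p := by ring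
    rw [this, key _ (le_trans hm (Nat.le_add_right _ _)), ih]

/-- P1: long congruent blank runs end in the same state. -/
theorem iter_eq_of_modEq (f : Q → Q) (q : Q) {L L' N : ℕ}
    (hN : N = (Finset.Icc 1 (Fintype.card Q)).lcm id)
    (h1 : Fintype.card Q ≤ L) (h2 : Fintype.card Q ≤ L') (hmod : L ≡ L' [MOD N]) :
    f^[L] q = f^[L'] q := by
  obtain ⟨i, p, hppos, hle, hper⟩ := exists_period f q
  have hpN : p ∣ N := by
    rw [hN]
    exact Finset.dvd_lcm (by simp [Finset.mem_Icc]; omega)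
  wlog hLL : L ≤ L' generalizing L L'
  · exact (this h2 h1 hmod.symm (le_of_not_ge hLL)).symm
  have hdvd : N ∣ L' - L := (Nat.modEq_iff_dvd' hLL).mp hmod
  obtain ⟨c, hc⟩ := hpN.trans hdvd
  have hL' : L' = L + p * c := by omega
  rw [hL', mul_comm p c, iter_period f q hper L (by omega) c]

/-- P2': any far iterate is matched by one below `card Q`. -/
theorem iter_eq_small (f : Q → Q) (q : Q) {o : ℕ} (ho : Fintype.card Q ≤ o) :
    ∃ o' : ℕ, o' < Fintype.card Q ∧ o' ≤ o ∧ f^[o'] q = f^[o] q := by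
  obtain ⟨i, p, hppos, hle, hper⟩ := exists_period f q
  refine ⟨i + (o - i) % p, by have := Nat.mod_lt (o - i) hppos; omega,
    by have := Nat.mod_le (o - i) p; omega, ?_⟩
  have key := iter_period f q hper (i + (o - i) % p) (Nat.le_add_right _ _) ((o - i) / p)
  rw [← key]
  congr 1
  have h2 : (o - i) / p * p + (o - i) % p = o - i := Nat.div_add_mod' (o - i) p
  omega

end Stmt11Aux

namespace Stmt11Aux

variable {S : Type*} {k : ℕ}

/-- extension of the parameter vector to ℕ -/
def xe (k : ℕ) (x : Fin (k + 1) → ℕ) (i : ℕ) : ℕ :=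
  if h : i < k + 1 then x ⟨i, h⟩ else 0

/-- start position of block `j` (for `j ≤ k`) -/
def bs (k : ℕ) (x : Fin (k + 1) → ℕ) (j : ℕ) : ℕ :=
  (∑ i ∈ Finset.range j, xe k x i) + j

theorem bs_succ (x : Fin (k + 1) → ℕ) (j : ℕ) :
    bs k x (j + 1) = bs k x j + xe k x j + 1 := by
  simp [bs, Finset.sum_range_succ]; ring

theorem bs_mono (x : Fin (k + 1) → ℕ) {j j' : ℕ} (h : j ≤ j') :
    bs k x j ≤ bs k x j' := by
  induction j' with
  | zero => simpa using (Nat.le_zero.mp h) ▸ le_refl _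
  | succ j' ih =>
    rcases Nat.lt_or_ge j (j' + 1) with h' | h'
    · exact le_trans (ih (by omega)) (by rw [bs_succ]; omega)
    · have : j = j' + 1 := by omega
      rw [this]

theorem sum_Iic_eq (x : Fin (k + 1) → ℕ) (jj : Fin (k + 1)) :
    ∑ i ∈ Finset.Iic jj, x i = ∑ m ∈ Finset.range ((jj : ℕ) + 1), xe k x m := by
  have himg : (Finset.Iic jj).image Fin.val = Finset.range ((jj : ℕ) + 1) := by
    ext m
    simp only [Finset.mem_image, Finset.mem_Iic, Finset.mem_range]
    constructor
    · rintro ⟨i, hi, rfl⟩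
      have := Fin.le_def.mp hi
      omega
    · intro hm
      have hmk : m < k + 1 := by omega
      exact ⟨⟨m, hmk⟩, Fin.le_def.mpr (by simpa using by omega), rfl⟩
  rw [← himg, Finset.sum_image (fun a _ b _ h => Fin.val_injective h)]
  apply Finset.sum_congr rfl
  intro i _
  simp [xe]
  intro h; exact absurd i.isLt (by omega)

/-- the position of symbol `j` equals `bs j + xe j` -/
theorem symbol_pos (x : Fin (k + 1) → ℕ) (j : Fin k) :
    (∑ i ∈ Finset.Iic (Fin.castSucc j), x i) + (j : ℕ)
      = bs k x (j : ℕ) + xe k x (j : ℕ) := by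
  rw [sum_Iic_eq x (Fin.castSucc j)]
  simp only [Fin.coe_castSucc, bs]
  rw [Finset.sum_range_succ]
  ring

theorem symbol_pos_strictMono (x : Fin (k + 1) → ℕ) {j j' : Fin k} (h : j < j') :
    bs k x (j : ℕ) + xe k x (j : ℕ) < bs k x (j' : ℕ) + xe k x (j' : ℕ) := by
  have h1 : bs k x ((j : ℕ) + 1) ≤ bs k x (j' : ℕ) := bs_mono x (by exact h)
  rw [bs_succ] at h1
  have h2 : bs k x (j' : ℕ) ≤ bs k x (j' : ℕ) + xe k x (j' : ℕ) := Nat.le_add_right _ _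
  omega

/-- reading a blank cell: offset `o` into block `j`, with `o < xe j` or `j = k`. -/
theorem guess_blank (x : Fin (k + 1) → ℕ) (s : Fin k → S) (j o : ℕ)
    (hj : j ≤ k) (ho : o < xe k x j ∨ j = k) :
    sparseGuess k x s (bs k x j + o) = none := by
  rw [sparseGuess, dif_neg]
  rintro ⟨j', hj'⟩
  rw [symbol_pos] at hj'
  rcases Nat.lt_or_ge (j' : ℕ) j with h | h
  · -- symbol j' is before block j
    have h1 : bs k x ((j' : ℕ) + 1) ≤ bs k x j := bs_mono x h
    rw [bs_succ] at h1
    omega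
  · -- j' ≥ j, so j < k and symbol j' is at/after end of block j
    have hjk : (j' : ℕ) < k := j'.isLt
    rcases ho with ho | rfl
    · have h1 : bs k x j + xe k x j ≤ bs k x (j' : ℕ) + xe k x (j' : ℕ) := by
        rcases Nat.eq_or_lt_of_le h with h' | h'
        · rw [← h']
        · have := bs_mono x (show j + 1 ≤ (j' : ℕ) from h')
          rw [bs_succ] at this
          omega
      omega
    · omega

/-- reading the symbol cell at the end of block `j < k`. -/
theorem guess_symbol (x : Fin (k + 1) → ℕ) (s : Fin k → S) (j : Fin k) :
    sparseGuess k x s (bs k x (j : ℕ) + xe k x (j : ℕ)) = some (s j) := by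
  have hex : ∃ j' : Fin k, bs k x (j : ℕ) + xe k x (j : ℕ)
      = (∑ i ∈ Finset.Iic (Fin.castSucc j'), x i) + (j' : ℕ) :=
    ⟨j, (symbol_pos x j).symm⟩
  rw [sparseGuess, dif_pos hex]
  have hspec := hex.choose_spec
  rw [symbol_pos] at hspec
  have hcj : hex.choose = j := by
    by_contra hne
    rcases Fin.lt_or_lt_of_ne hne with h | h
    · exact absurd hspec (Nat.ne_of_gt (symbol_pos_strictMono x h))
    · exact absurd hspec (Nat.ne_of_lt (symbol_pos_strictMono x h))
  rw [hcj]

end Stmt11Aux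
namespace Stmt11Aux

theorem wstep_eq {Q S : Type*} (δ : Q → Option S → Q × Bool) (τ : ℕ → Option S)
    (q : Q) (p : ℕ) :
    wstep δ τ (q, p) = ((δ q (τ p)).1, if (δ q (τ p)).2 then p + 1 else 0) := rfl

theorem bs_zero {k : ℕ} (x : Fin (k + 1) → ℕ) : bs k x 0 = 0 := by simp [bs]

end Stmt11Aux


open Stmt11Aux in
theorem stmt_11 {Q S : Type*} [Fintype Q] (δ : Q → Option S → Q × Bool)
    (A : Set Q) (q₀ : Q) (k : ℕ) (s : Fin k → S)
    (N : ℕ) (hN : N = (Finset.Icc 1 (Fintype.card Q)).lcm id)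
    (x : Fin (k + 1) → ℕ)
    (hx : wAccepts δ A q₀ (sparseGuess k x s)) :
    ∃ y : Fin (k + 1) → ℕ, (∀ i, y i ≤ Fintype.card Q + N) ∧
      wAccepts δ A q₀ (sparseGuess k y s) := by
  have hQ1 : 1 ≤ Fintype.card Q := @Fintype.card_pos Q _ ⟨q₀⟩
  have hN0 : 0 < N := by
    rcases Nat.eq_zero_or_pos N with h0 | h; swap
    · exact h
    rw [hN, Finset.lcm_eq_zero_iff] at h0
    obtain ⟨a, ha, ha0⟩ := h0
    simp only [Finset.mem_Icc, Finset.coe_Icc, Set.mem_Icc, id] at ha ha0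
    omega
  set y : Fin (k + 1) → ℕ := fun i =>
    if x i ≤ Fintype.card Q + N then x i
    else Fintype.card Q + (x i - Fintype.card Q) % N with hy
  refine ⟨y, ?_, ?_⟩
  · intro i
    simp only [hy]
    split_ifs with h
    · exact h
    · have := Nat.mod_lt (x i - Fintype.card Q) hN0
      omega
  -- key per-block properties of the shrunken parameters
  have hkey : ∀ j : ℕ, j < k + 1 →
      xe k y j ≤ xe k x j ∧ (xe k y j = xe k x j ∨ Fintype.card Q ≤ xe k y j) ∧
      ∀ q : Q, (hs δ)^[xe k x j] q = (hs δ)^[xe k y j] q := by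
    intro j hj
    simp only [xe, dif_pos hj, hy]
    set L := x ⟨j, hj⟩ with hL
    split_ifs with h
    · exact ⟨le_refl _, Or.inl rfl, fun q => rfl⟩
    · push_neg at h
      have hmlt := Nat.mod_lt (L - Fintype.card Q) hN0
      refine ⟨by omega, Or.inr (Nat.le_add_right _ _), fun q => ?_⟩
      apply iter_eq_of_modEq (hs δ) q hN (by omega) (Nat.le_add_right _ _)
      have h1 : (L - Fintype.card Q) % N ≡ (L - Fintype.card Q) [MOD N] :=
        Nat.mod_modEq _ _
      have h2 := (Nat.ModEq.add_left (Fintype.card Q) h1).symm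
      have h3 : Fintype.card Q + (L - Fintype.card Q) = L := by omega
      rw [h3] at h2
      exact h2
  set τx := sparseGuess k x s with hτx
  set τy := sparseGuess k y s with hτy
  simp only [wAccepts] at hx ⊢
  -- main invariant on the run over the original tape
  have inv : ∀ n : ℕ, ∃ (j o : ℕ) (e : Q) (m : ℕ), j ≤ k ∧
      (j < k → o ≤ xe k x j) ∧ good δ e o ∧
      (wstep δ τx)^[n] (q₀, 0) = ((hs δ)^[o] e, bs k x j + o) ∧
      (wstep δ τy)^[m] (q₀, 0) = (e, bs k y j) := by
    intro n
    induction n with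
    | zero =>
      exact ⟨0, 0, q₀, 0, Nat.zero_le k, fun _ => Nat.zero_le _, good_zero δ q₀,
        by simp [bs_zero], by simp [bs_zero]⟩
    | succ n ih =>
      obtain ⟨j, o, e, m, hjk, hox, hgood, hrx, hry⟩ := ih
      rw [Function.iterate_succ_apply', hrx]
      set q := (hs δ)^[o] e with hq
      by_cases hsym : j < k ∧ o = xe k x j
      · -- at the symbol cell at the end of block j < k
        obtain ⟨hjlt, rfl⟩ := hsym
        set jf : Fin k := ⟨j, hjlt⟩ with hjf
        have hτxv : τx (bs k x j + xe k x j) = some (s jf) := guess_symbol x s jf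
        have hyblank : ∀ i < xe k y j, τy (bs k y j + i) = none := fun i hi =>
          guess_blank y s j i hjk (Or.inl hi)
        have hygood : good δ e (xe k y j) :=
          good_mono hgood (hkey j (by omega)).1
        have hyrun : (wstep δ τy)^[xe k y j] (e, bs k y j)
            = (q, bs k y j + xe k y j) := by
          rw [blank_run δ τy e _ _ hyblank hygood, ← (hkey j (by omega)).2.2 e]
        have hτyv : τy (bs k y j + xe k y j) = some (s jf) := guess_symbol y s jf
        have hyrun1 : (wstep δ τy)^[xe k y j + 1 + m] (q₀, 0)
            = ((δ q (some (s jf))).1,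
               if (δ q (some (s jf))).2 then bs k y j + xe k y j + 1 else 0) := by
          rw [show xe k y j + 1 + m = 1 + (xe k y j + m) by ring,
            Function.iterate_add_apply, Function.iterate_add_apply, hry, hyrun,
            Function.iterate_one, wstep_eq, hτyv]
        rcases hmv : (δ q (some (s jf))).2 with _ | _
        · -- reset upon reading the symbol
          refine ⟨0, 0, (δ q (some (s jf))).1, xe k y j + 1 + m, Nat.zero_le k,
            fun _ => Nat.zero_le _, good_zero δ _, ?_, ?_⟩
          · rw [wstep_eq, hτxv, hmv]
            simp [bs_zero]
          · rw [hyrun1, hmv]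
            simp [bs_zero]
        · -- move right onto block j + 1
          refine ⟨j + 1, 0, (δ q (some (s jf))).1, xe k y j + 1 + m, hjlt,
            fun _ => Nat.zero_le _, good_zero δ _, ?_, ?_⟩
          · rw [wstep_eq, hτxv, hmv, bs_succ]
            simp
          · rw [hyrun1, hmv, bs_succ]
            simp
      · -- at a blank cell of block j
        have hblank : o < xe k x j ∨ j = k := by
          rcases Nat.lt_or_ge j k with h | h
          · exact Or.inl (lt_of_le_of_ne (hox h) (fun he => hsym ⟨h, he⟩))
          · exact Or.inr (le_antisymm hjk h)
        have hτxv : τx (bs k x j + o) = none := guess_blank x s j o hjk hblank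
        have hiter : (δ q none).1 = (hs δ)^[o + 1] e := by
          rw [Function.iterate_succ_apply', ← hq]; rfl
        rcases hfl : (δ q none).2 with _ | _
        · -- reset on a blank: the y-run resets with the same state
          have hoy : o < xe k y j ∨ j = k := by
            rcases hblank with h | h; swap
            · exact Or.inr h
            rcases (hkey j (by omega)).2.1 with h2 | h2
            · exact Or.inl (by omega)
            · left
              rcases Nat.lt_or_ge o (Fintype.card Q) with h3 | h3
              · omega
              · obtain ⟨o', ho'1, ho'2, ho'3⟩ := iter_eq_small (hs δ) e h3
                have hlt : o' < o := by omega
                have := hgood o' hlt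
                rw [ho'3, ← hq, hfl] at this
                exact absurd this (by simp)
          have hyblank : ∀ i ≤ o, τy (bs k y j + i) = none := by
            intro i hi
            apply guess_blank y s j i hjk
            rcases hoy with h | h
            · exact Or.inl (by omega)
            · exact Or.inr h
          have hyreset : (wstep δ τy)^[o + 1] (e, bs k y j)
              = ((hs δ)^[o + 1] e, 0) :=
            blank_reset δ τy e _ o hyblank hgood (by rw [← hq, hfl])
          refine ⟨0, 0, (hs δ)^[o + 1] e, (o + 1) + m, Nat.zero_le k,
            fun _ => Nat.zero_le _, good_zero δ _, ?_, ?_⟩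
          · rw [wstep_eq, hτxv, hfl, hiter]
            simp [bs_zero]
          · rw [Function.iterate_add_apply, hry, hyreset]
            simp [bs_zero]
        · -- move right within the block
          refine ⟨j, o + 1, e, m, hjk, ?_, ?_, ?_, hry⟩
          · intro h
            rcases hblank with h' | h'
            · omega
            · omega
          · intro i hi
            rcases Nat.lt_or_ge i o with h | h
            · exact hgood i h
            · have : i = o := by omega
              rw [this, ← hq, hfl]
          · rw [wstep_eq, hτxv, hfl, hiter]
            simp [Nat.add_assoc]
  -- transfer acceptance to the y-tape
  obtain ⟨n, hn⟩ := hx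
  obtain ⟨j, o, e, m, hjk, hox, hgood, hrx, hry⟩ := inv n
  rw [hrx] at hn
  have hsmall : ∃ o' : ℕ, o' ≤ o ∧ (j < k → o' ≤ xe k y j) ∧
      (hs δ)^[o'] e = (hs δ)^[o] e := by
    rcases Nat.lt_or_ge j k with hjlt | hjge
    · rcases Nat.lt_or_ge (xe k y j) o with h | h
      · have hcard : Fintype.card Q ≤ xe k y j := by
          rcases (hkey j (by omega)).2.1 with h2 | h2
          · have := hox hjlt; omega
          · exact h2
        obtain ⟨o', ho'1, ho'2, ho'3⟩ := iter_eq_small (hs δ) e (o := o) (by omega)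
        exact ⟨o', ho'2, fun _ => by omega, ho'3⟩
      · exact ⟨o, le_refl o, fun _ => h, rfl⟩
    · exact ⟨o, le_refl o, fun h => absurd h (by omega), rfl⟩
  obtain ⟨o', ho'o, ho'y, ho'st⟩ := hsmall
  have hyblank : ∀ i < o', τy (bs k y j + i) = none := by
    intro i hi
    apply guess_blank y s j i hjk
    rcases Nat.lt_or_ge j k with hjlt | hjge
    · exact Or.inl (by have := ho'y hjlt; omega)
    · exact Or.inr (by omega)
  have hyrun : (wstep δ τy)^[o'] (e, bs k y j) = ((hs δ)^[o'] e, bs k y j + o') :=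
    blank_run δ τy e _ _ hyblank (good_mono hgood ho'o)
  refine ⟨o' + m, ?_⟩
  rw [Function.iterate_add_apply, hry, hyrun, ho'st]
  exact hn
end
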